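/- For any trace-preserving linear map 𝒞 on 2×2 complex matrices, the entanglement fidelity F(𝒞) = ⟨φ|(ℐ⊗𝒞)(|φ⟩⟨φ|)|φ⟩ with |φ⟩ = (|00⟩+|11⟩)/√2 satisfies F(𝒞) = (1/4)·Σ_{P∈{X,Y,Z}, b∈{0,1}} Tr[𝒞(Π_{P,b}) Π_{P,b}] − 1/2, where Π_{P,b} = (I + (−1)^b P)/2. -/

import Mathlib

open Matrix Complex Kronecker
open scoped BigOperators

noncomputable section

def Xp : Matrix (Fin 2) (Fin 2) ℂ := !![0, 1; 1, 0]
def Yp : Matrix (Fin 2) (Fin 2) ℂ := !![0, -Complex.I; Complex.I, 0]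
def Zp : Matrix (Fin 2) (Fin 2) ℂ := !![1, 0; 0, -1]

/-- Projector onto the eigenstate of the Pauli `P` with eigenvalue `(−1)^b`. -/
def proj (P : Matrix (Fin 2) (Fin 2) ℂ) (b : Fin 2) : Matrix (Fin 2) (Fin 2) ℂ :=
  ((1 : ℂ) / 2) • (1 + ((-1 : ℂ) ^ (b : ℕ)) • P)

/-- The maximally entangled two-qubit state `|φ⟩ = (|00⟩+|11⟩)/√2`. -/
def phi : Fin 2 × Fin 2 → ℂ := fun p => if p.1 = p.2 then (1 / Real.sqrt 2 : ℝ) else 0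

def E (a b : Fin 2) : Matrix (Fin 2) (Fin 2) ℂ := Matrix.single a b 1

/-- `(ℐ ⊗ 𝒞)(|φ⟩⟨φ|)`. -/
def idTensorApplyPhi (C : Matrix (Fin 2) (Fin 2) ℂ →ₗ[ℂ] Matrix (Fin 2) (Fin 2) ℂ) :
    Matrix (Fin 2 × Fin 2) (Fin 2 × Fin 2) ℂ :=
  ((1 : ℂ) / 2) • ∑ a : Fin 2, ∑ b : Fin 2, (E a b) ⊗ₖ (C (E a b))

lemma E_apply (a b i j : Fin 2) : E a b i j = if a = i ∧ b = j then 1 else 0 := by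
  simp [E, Matrix.single]

lemma hXY : Xp ≠ Yp := by
  intro h
  have := congrArg (fun M => M 0 1) h
  simp only [Xp, Yp, Matrix.cons_val', Matrix.cons_val_zero, Matrix.cons_val_one,
    Matrix.head_cons, Matrix.empty_val', Matrix.cons_val_fin_one, Matrix.head_fin_const] at this
  have := congrArg Complex.re this
  simp at this

lemma hXZ : Xp ≠ Zp := by
  intro h
  have := congrArg (fun M => M 0 0) h
  simp only [Xp, Zp, Matrix.cons_val', Matrix.cons_val_zero, Matrix.empty_val',
    Matrix.cons_val_fin_one] at this
  exact zero_ne_one this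

lemma hYZ : Yp ≠ Zp := by
  intro h
  have := congrArg (fun M => M 0 0) h
  simp only [Yp, Zp, Matrix.cons_val', Matrix.cons_val_zero, Matrix.empty_val',
    Matrix.cons_val_fin_one] at this
  exact zero_ne_one this

/-- for trace-preserving `𝒞`,
`F(𝒞) = (1/4) Σ_{P∈{X,Y,Z}, b} Tr[𝒞(Π_{P,b}) Π_{P,b}] − 1/2`. -/
theorem entanglement_fidelity_pauli_form
    (C : Matrix (Fin 2) (Fin 2) ℂ →ₗ[ℂ] Matrix (Fin 2) (Fin 2) ℂ)
    (htp : ∀ M, (C M).trace = M.trace) :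
    star phi ⬝ᵥ (idTensorApplyPhi C).mulVec phi =
      ((1 : ℂ) / 4) * (∑ P ∈ ({Xp, Yp, Zp} : Finset (Matrix (Fin 2) (Fin 2) ℂ)),
          ∑ b : Fin 2, (C (proj P b) * proj P b).trace) - 1 / 2 := by
  have hone : (1 : Matrix (Fin 2) (Fin 2) ℂ) = E 0 0 + E 1 1 := by
    ext i j; fin_cases i <;> fin_cases j <;> simp [E_apply, Matrix.one_apply]
  have hX : Xp = E 0 1 + E 1 0 := by
    ext i j; fin_cases i <;> fin_cases j <;> simp [E_apply, Xp]
  have hY : Yp = (-Complex.I) • E 0 1 + Complex.I • E 1 0 := by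
    ext i j; fin_cases i <;> fin_cases j <;> simp [E_apply, Yp]
  have hZ : Zp = E 0 0 - E 1 1 := by
    ext i j; fin_cases i <;> fin_cases j <;> simp [E_apply, Zp]
  have hsum : (∑ P ∈ ({Xp, Yp, Zp} : Finset (Matrix (Fin 2) (Fin 2) ℂ)),
      ∑ b : Fin 2, (C (proj P b) * proj P b).trace)
      = (∑ b : Fin 2, (C (proj Xp b) * proj Xp b).trace)
        + (∑ b : Fin 2, (C (proj Yp b) * proj Yp b).trace)
        + (∑ b : Fin 2, (C (proj Zp b) * proj Zp b).trace) := by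
    rw [Finset.sum_insert (by simp [hXY, hXZ]), Finset.sum_insert (by simp [hYZ]),
      Finset.sum_singleton]
    ring
  have ht00 := htp (E 0 0)
  have ht01 := htp (E 0 1)
  have ht10 := htp (E 1 0)
  have ht11 := htp (E 1 1)
  simp only [Matrix.trace_fin_two, E_apply] at ht00 ht01 ht10 ht11
  norm_num at ht00 ht01 ht10 ht11
  have hs2 : ((Real.sqrt 2 : ℝ) : ℂ)⁻¹ ^ 2 = 1 / 2 := by
    rw [← Complex.ofReal_inv, ← Complex.ofReal_pow, inv_pow, Real.sq_sqrt (by norm_num : (0:ℝ) ≤ 2)]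
    norm_num
  rw [hsum]
  simp only [proj, hone, hX, hY, hZ, map_add, _root_.map_smul, map_sub, Fin.sum_univ_two]
  simp only [idTensorApplyPhi, dotProduct, mulVec, Fintype.sum_prod_type, Fin.sum_univ_two,
    Matrix.smul_apply, Matrix.sum_apply, kroneckerMap_apply, E_apply, phi,
    Matrix.trace_fin_two, Matrix.mul_apply, Matrix.add_apply, Matrix.sub_apply,
    Pi.star_apply, star_zero, RCLike.star_def, conj_ofReal]
  norm_num
  linear_combination ((C (E 0 0) 0 0 + C (E 0 1) 0 1 + C (E 1 0) 1 0 + C (E 1 1) 1 1) / 2) * hs2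
    + ((C (E 0 1) 0 1 + C (E 1 0) 1 0 - C (E 1 0) 0 1 - C (E 0 1) 1 0) / 8) * Complex.I_sq
    - ((1 : ℂ) / 4) * ht00 - ((1 : ℂ) / 4) * ht11

end
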